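/- The number of equivalence classes of Hermitian self-dual codes of length 22 over F_4 is at least ∏_{i=0}^{10}(2^{2i+1}+1) / (22! · 3^{21}), and this quantity exceeds 397588. -/

import Mathlib

abbrev F4 := GaloisField 2 2

noncomputable def hIP {n : ℕ} (x y : Fin n → F4) : F4 := ∑ i, x i * (y i) ^ 2

/-- Hamming weight. -/
noncomputable def wt {n : ℕ} (x : Fin n → F4) : ℕ := Nat.card {i : Fin n // x i ≠ 0}

/-- Hermitian dual code. -/
noncomputable def hDual {n : ℕ} (C : Submodule F4 (Fin n → F4)) : Submodule F4 (Fin n → F4) where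
  carrier := {x | ∀ c ∈ C, hIP x c = 0}
  add_mem' := by
    intro a b ha hb c hc
    have h : hIP (a + b) c = hIP a c + hIP b c := by
      simp [hIP, add_mul, Finset.sum_add_distrib]
    simp only [h, ha c hc, hb c hc, add_zero]
  zero_mem' := by intro c hc; simp [hIP]
  smul_mem' := by
    intro r x hx c hc
    have h : hIP (r • x) c = r * hIP x c := by
      simp [hIP, Finset.mul_sum, mul_assoc]
    simp only [h, hx c hc, mul_zero]

/-- Monomial transformation given by permutation `π` and nonzero scalars `s`. -/
noncomputable def monomialMap {n : ℕ} (π : Equiv.Perm (Fin n)) (s : Fin n → F4ˣ) :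
    (Fin n → F4) →ₗ[F4] (Fin n → F4) where
  toFun x := fun i => (s i : F4) * x (π i)
  map_add' := by intro x y; funext i; simp [mul_add]
  map_smul' := by intro r x; funext i; simp [mul_comm, mul_left_comm]

/-- Monomial equivalence of codes. -/
noncomputable def CodeEquiv {n : ℕ} (C C' : Submodule F4 (Fin n → F4)) : Prop :=
  ∃ (π : Equiv.Perm (Fin n)) (s : Fin n → F4ˣ), C.map (monomialMap π s) = C'

/-- Order of the automorphism group (monomial transformations preserving `C`). -/
noncomputable def autCard {n : ℕ} (C : Submodule F4 (Fin n → F4)) : ℕ :=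
  Nat.card {p : Equiv.Perm (Fin n) × (Fin n → F4ˣ) // C.map (monomialMap p.1 p.2) = C}

/-- Direct sum of two codes. -/
noncomputable def dsum {n₁ n₂ : ℕ} (C₁ : Submodule F4 (Fin n₁ → F4)) (C₂ : Submodule F4 (Fin n₂ → F4)) :
    Submodule F4 (Fin (n₁ + n₂) → F4) :=
  (C₁.comap (LinearMap.funLeft F4 F4 (Fin.castAdd n₂))) ⊓
    (C₂.comap (LinearMap.funLeft F4 F4 (Fin.natAdd n₁)))

namespace SD12

noncomputable instance : Fintype F4 := Fintype.ofFinite F4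
noncomputable instance : DecidableEq F4 := Classical.decEq _

lemma F4card : Fintype.card F4 = 4 := by
  have := GaloisField.card 2 2 (by norm_num); simpa using this

lemma F4pow4 (a : F4) : a ^ 4 = a := by
  have := FiniteField.pow_card a; rwa [F4card] at this

instance : CharP F4 2 := inferInstanceAs (CharP (GaloisField 2 2) 2)

lemma two_eq_zero : (2 : F4) = 0 := by exact_mod_cast CharP.cast_eq_zero F4 2

lemma add_self (a : F4) : a + a = 0 := by
  have : a + a = 2 * a := by ring
  rw [this, two_eq_zero, zero_mul]

lemma exists_ww : ∃ a : F4, a ≠ 0 ∧ a ≠ 1 := by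
  by_contra h
  push_neg at h
  have h2 : ∀ a : F4, a ∈ ({0, 1} : Finset F4) := by
    intro a
    rcases eq_or_ne a 0 with h0 | h0
    · simp [h0]
    · simp [h a h0]
  have hle := Finset.card_le_card (fun a _ => h2 a : (Finset.univ : Finset F4) ⊆ {0, 1})
  rw [Finset.card_univ, F4card] at hle
  have : ({0, 1} : Finset F4).card ≤ 2 := Finset.card_insert_le _ _ |>.trans (by simp)
  omega

noncomputable def ww : F4 := Classical.choose exists_ww

lemma ww_ne_zero : ww ≠ 0 := (Classical.choose_spec exists_ww).1
lemma ww_ne_one : ww ≠ 1 := (Classical.choose_spec exists_ww).2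

lemma ww_cube : ww ^ 3 = 1 := by
  have h4 := F4pow4 ww
  have : ww * ww ^ 3 = ww * 1 := by rw [mul_one]; rw [← pow_succ']; exact h4
  exact mul_left_cancel₀ ww_ne_zero this

lemma ww_sq : ww ^ 2 = ww + 1 := by
  have h : (ww - 1) * (ww ^ 2 + ww + 1) = 0 := by
    have : (ww - 1) * (ww ^ 2 + ww + 1) = ww ^ 3 - 1 := by ring
    rw [this, ww_cube, sub_self]
  have hne : ww - 1 ≠ 0 := sub_ne_zero.mpr ww_ne_one
  have h2 : ww ^ 2 + ww + 1 = 0 := by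
    rcases mul_eq_zero.mp h with h' | h'
    · exact absurd h' hne
    · exact h'
  linear_combination h2 - add_self ww - add_self 1

lemma ww_add_sq : ww + ww ^ 2 = 1 := by
  have h2 : ww ^ 2 + ww + 1 = 0 := by
    rw [ww_sq]; linear_combination add_self ww + add_self 1
  linear_combination h2 - add_self 1

section hIPlemmas

variable {n : ℕ} (x y z : Fin n → F4)

lemma hIP_add_left : hIP (x + y) z = hIP x z + hIP y z := by
  simp [hIP, add_mul, Finset.sum_add_distrib]

lemma hIP_add_right : hIP x (y + z) = hIP x y + hIP x z := by
  simp only [hIP, ← Finset.sum_add_distrib]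
  refine Finset.sum_congr rfl fun i _ => ?_
  have h : (y i + z i) ^ 2 = y i ^ 2 + z i ^ 2 := by
    have : (y i + z i) ^ 2 = y i ^ 2 + z i ^ 2 + 2 * (y i * z i) := by ring
    rw [this, two_eq_zero]; ring
  simp [Pi.add_apply, h, mul_add]

lemma hIP_smul_left (c : F4) : hIP (c • x) y = c * hIP x y := by
  simp [hIP, Finset.mul_sum, mul_assoc]

lemma hIP_smul_right (c : F4) : hIP x (c • y) = c ^ 2 * hIP x y := by
  simp only [hIP, Finset.mul_sum]
  refine Finset.sum_congr rfl fun i _ => ?_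
  simp [Pi.smul_apply, smul_eq_mul, mul_pow]; ring

lemma hIP_swap : hIP y x = hIP x y ^ 2 := by
  have h := sum_pow_char (R := F4) 2 Finset.univ (fun i => x i * y i ^ 2)
  rw [hIP, hIP, h]
  refine Finset.sum_congr rfl fun i _ => ?_
  have h2 : (x i * y i ^ 2) ^ 2 = x i ^ 2 * (y i)^4 := by ring
  rw [h2, F4pow4]; ring

lemma hIP_self_cases : hIP x x = 0 ∨ hIP x x = 1 := by
  have h : hIP x x = hIP x x ^ 2 := hIP_swap x x
  have : hIP x x * (hIP x x - 1) = 0 := by linear_combination -h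
  rcases mul_eq_zero.mp this with h' | h'
  · exact Or.inl h'
  · exact Or.inr (by linear_combination h')

lemma hIP_single_single (i j : Fin n) (a b : F4) :
    hIP (Pi.single i a) (Pi.single j b) = if i = j then a * b ^ 2 else 0 := by
  rw [hIP]
  rw [Finset.sum_eq_single i]
  · by_cases h : i = j
    · subst h; simp
    · simp [Pi.single_eq_of_ne' h, h]
  · intro k _ hk
    simp [Pi.single_eq_of_ne hk]
  · simp

lemma hIP_eq_zero_of_disj (h : ∀ i, x i = 0 ∨ y i = 0) : hIP x y = 0 := by
  rw [hIP]
  refine Finset.sum_eq_zero fun i _ => ?_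
  rcases h i with h' | h' <;> simp [h']

end hIPlemmas

abbrev X := Fin 22 → F4

noncomputable def Sm (m : ℕ) : Submodule F4 X where
  carrier := {x | ∀ i : Fin 22, 2 * m ≤ (i : ℕ) → x i = 0}
  add_mem' := by intro a b ha hb i hi; simp [ha i hi, hb i hi]
  zero_mem' := by intro i _; rfl
  smul_mem' := by intro c x hx i hi; simp [hx i hi]

lemma mem_Sm {m : ℕ} {x : X} : x ∈ Sm m ↔ ∀ i : Fin 22, 2 * m ≤ (i : ℕ) → x i = 0 := Iff.rfl

lemma Sm_mono {m m' : ℕ} (h : m ≤ m') : Sm m ≤ Sm m' := by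
  intro x hx i hi
  exact hx i (le_trans (by omega) hi)

lemma hIP_Sm_zero_left {m : ℕ} {x y : X} (hx : x ∈ Sm m)
    (hy : ∀ i : Fin 22, (i : ℕ) < 2 * m → y i = 0) : hIP x y = 0 := by
  refine hIP_eq_zero_of_disj x y fun i => ?_
  rcases lt_or_ge (i : ℕ) (2 * m) with h | h
  · exact Or.inr (hy i h)
  · exact Or.inl (hx i h)

lemma hIP_Sm_zero_right {m : ℕ} {x y : X} (hx : x ∈ Sm m)
    (hy : ∀ i : Fin 22, (i : ℕ) < 2 * m → y i = 0) : hIP y x = 0 := by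
  rw [hIP_swap, hIP_Sm_zero_left hx hy]; simp

section step

variable (m : ℕ) (hm : m ≤ 10)

def j0 : Fin 22 := ⟨2 * m, by omega⟩
def j1 : Fin 22 := ⟨2 * m + 1, by omega⟩

lemma j0_ne_j1 : j0 m hm ≠ j1 m hm := by
  simp [j0, j1, Fin.ext_iff]

noncomputable def eV : X := Pi.single (j0 m hm) 1 + Pi.single (j1 m hm) 1
noncomputable def fV : X := Pi.single (j0 m hm) ww + Pi.single (j1 m hm) (ww ^ 2)

lemma eV_low (i : Fin 22) (hi : (i : ℕ) < 2 * m) : eV m hm i = 0 := by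
  have h0 : i ≠ j0 m hm := by simp [j0, Fin.ext_iff]; omega
  have h1 : i ≠ j1 m hm := by simp [j1, Fin.ext_iff]; omega
  simp [eV, Pi.single_eq_of_ne h0, Pi.single_eq_of_ne h1]

lemma fV_low (i : Fin 22) (hi : (i : ℕ) < 2 * m) : fV m hm i = 0 := by
  have h0 : i ≠ j0 m hm := by simp [j0, Fin.ext_iff]; omega
  have h1 : i ≠ j1 m hm := by simp [j1, Fin.ext_iff]; omega
  simp [fV, Pi.single_eq_of_ne h0, Pi.single_eq_of_ne h1]

lemma eV_mem : eV m hm ∈ Sm (m + 1) := by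
  intro i hi
  have h0 : i ≠ j0 m hm := by simp [j0, Fin.ext_iff]; omega
  have h1 : i ≠ j1 m hm := by simp [j1, Fin.ext_iff]; omega
  simp [eV, Pi.single_eq_of_ne h0, Pi.single_eq_of_ne h1]

lemma fV_mem : fV m hm ∈ Sm (m + 1) := by
  intro i hi
  have h0 : i ≠ j0 m hm := by simp [j0, Fin.ext_iff]; omega
  have h1 : i ≠ j1 m hm := by simp [j1, Fin.ext_iff]; omega
  simp [fV, Pi.single_eq_of_ne h0, Pi.single_eq_of_ne h1]

lemma fV_j0 : fV m hm (j0 m hm) = ww := by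
  simp [fV, Pi.single_eq_of_ne (j0_ne_j1 m hm)]

lemma Sm_val_j0 {x : X} (hx : x ∈ Sm m) : x (j0 m hm) = 0 := hx _ (by simp [j0])
lemma Sm_val_j1 {x : X} (hx : x ∈ Sm m) : x (j1 m hm) = 0 := hx _ (by simp [j1])

lemma hIP_eV_eV : hIP (eV m hm) (eV m hm) = 0 := by
  rw [eV, hIP_add_left, hIP_add_right, hIP_add_right]
  rw [hIP_single_single, hIP_single_single, hIP_single_single, hIP_single_single]
  rw [if_pos rfl, if_pos rfl, if_neg (j0_ne_j1 m hm), if_neg (Ne.symm (j0_ne_j1 m hm))]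
  simpa using add_self 1

lemma hIP_fV_fV : hIP (fV m hm) (fV m hm) = 0 := by
  rw [fV, hIP_add_left, hIP_add_right, hIP_add_right]
  rw [hIP_single_single, hIP_single_single, hIP_single_single, hIP_single_single]
  rw [if_pos rfl, if_pos rfl, if_neg (j0_ne_j1 m hm), if_neg (Ne.symm (j0_ne_j1 m hm))]
  have h1 : ww * ww ^ 2 = 1 := by rw [← pow_succ']; exact ww_cube
  have h2 : ww ^ 2 * (ww ^ 2) ^ 2 = 1 := by
    have : ww ^ 2 * (ww ^ 2) ^ 2 = (ww^3)^2 := by ring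
    rw [this, ww_cube, one_pow]
  rw [h1]
  rw [add_zero, zero_add, h2]
  exact add_self 1

lemma hIP_eV_fV : hIP (eV m hm) (fV m hm) = 1 := by
  rw [eV, fV, hIP_add_left, hIP_add_right, hIP_add_right]
  rw [hIP_single_single, hIP_single_single, hIP_single_single, hIP_single_single]
  rw [if_pos rfl, if_pos rfl, if_neg (j0_ne_j1 m hm), if_neg (Ne.symm (j0_ne_j1 m hm))]
  have h2 : (1:F4) * (ww ^ 2) ^ 2 = ww := by rw [one_mul, ← pow_mul]; exact F4pow4 ww
  rw [h2, one_mul]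
  rw [add_zero, zero_add, add_comm]
  exact ww_add_sq

lemma hIP_fV_eV : hIP (fV m hm) (eV m hm) = 1 := by
  rw [fV, eV, hIP_add_left, hIP_add_right, hIP_add_right]
  rw [hIP_single_single, hIP_single_single, hIP_single_single, hIP_single_single]
  rw [if_pos rfl, if_pos rfl, if_neg (j0_ne_j1 m hm), if_neg (Ne.symm (j0_ne_j1 m hm))]
  rw [one_pow, mul_one, mul_one]
  rw [add_zero, zero_add]
  exact ww_add_sq

/-- linear functional reading off the `eV`-coefficient -/
noncomputable def Af : X →ₗ[F4] F4 where
  toFun x := ww ^ 2 * x (j0 m hm) + ww * x (j1 m hm)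
  map_add' := by intro x y; simp [mul_add]; ring
  map_smul' := by intro c x; simp [smul_eq_mul]; ring

lemma Af_Sm {x : X} (hx : x ∈ Sm m) : Af m hm x = 0 := by
  simp [Af, Sm_val_j0 m hm hx, Sm_val_j1 m hm hx]

lemma Af_eV : Af m hm (eV m hm) = 1 := by
  simp [Af, eV, Pi.single_eq_of_ne (j0_ne_j1 m hm), Pi.single_eq_of_ne' (j0_ne_j1 m hm),
    Pi.single_eq_of_ne (Ne.symm (j0_ne_j1 m hm))]
  rw [add_comm]; exact ww_add_sq

lemma Af_fV : Af m hm (fV m hm) = 0 := by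
  simp [Af, fV, Pi.single_eq_of_ne (j0_ne_j1 m hm), Pi.single_eq_of_ne' (j0_ne_j1 m hm),
    Pi.single_eq_of_ne (Ne.symm (j0_ne_j1 m hm))]
  have h1 : ww ^ 2 * ww = 1 := by rw [← pow_succ]; exact ww_cube
  have h2 : ww * ww ^ 2 = 1 := by rw [← pow_succ']; exact ww_cube
  rw [h1, h2]; exact add_self 1

/-- truncation killing coordinates j0 and j1 -/
noncomputable def Pt : X →ₗ[F4] X where
  toFun x := fun i => if i = j0 m hm ∨ i = j1 m hm then 0 else x i
  map_add' := by
    intro x y; funext i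
    by_cases h : i = j0 m hm ∨ i = j1 m hm <;> simp [h]
  map_smul' := by
    intro c x; funext i
    by_cases h : i = j0 m hm ∨ i = j1 m hm <;> simp [h]

lemma Pt_Sm {x : X} (hx : x ∈ Sm m) : Pt m hm x = x := by
  funext i
  show (if i = j0 m hm ∨ i = j1 m hm then 0 else x i) = x i
  by_cases h : i = j0 m hm ∨ i = j1 m hm
  · rw [if_pos h]
    rcases h with h | h
    · rw [h, Sm_val_j0 m hm hx]
    · rw [h, Sm_val_j1 m hm hx]
  · rw [if_neg h]

lemma Pt_fV : Pt m hm (fV m hm) = 0 := by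
  funext i
  show (if i = j0 m hm ∨ i = j1 m hm then 0 else fV m hm i) = 0
  by_cases h : i = j0 m hm ∨ i = j1 m hm
  · rw [if_pos h]
  · rw [if_neg h]
    push_neg at h
    simp [fV, Pi.single_eq_of_ne h.1, Pi.single_eq_of_ne h.2]

lemma Pt_eV : Pt m hm (eV m hm) = 0 := by
  funext i
  show (if i = j0 m hm ∨ i = j1 m hm then 0 else eV m hm i) = 0
  by_cases h : i = j0 m hm ∨ i = j1 m hm
  · rw [if_pos h]
  · rw [if_neg h]
    push_neg at h
    simp [eV, Pi.single_eq_of_ne h.1, Pi.single_eq_of_ne h.2]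

/-- the "transvection-like" map x ↦ x + hIP x z • fV -/
noncomputable def Tz (z : X) : X →ₗ[F4] X where
  toFun x := x + hIP x z • fV m hm
  map_add' := by
    intro x y
    show (x + y) + hIP (x + y) z • fV m hm = (x + hIP x z • fV m hm) + (y + hIP y z • fV m hm)
    rw [hIP_add_left]
    module
  map_smul' := by
    intro c x
    show (c • x) + hIP (c • x) z • fV m hm = c • (x + hIP x z • fV m hm)
    rw [hIP_smul_left]
    module

lemma Tz_apply (z x : X) : Tz m hm z x = x + hIP x z • fV m hm := rfl

lemma hIP_fV_z {z : X} (hz : z ∈ Sm m) : hIP (fV m hm) z = 0 :=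
  hIP_Sm_zero_right hz (fV_low m hm)

lemma Tz_invol {z : X} (hz : z ∈ Sm m) (x : X) : Tz m hm z (Tz m hm z x) = x := by
  rw [Tz_apply, Tz_apply, hIP_add_left, hIP_smul_left, hIP_fV_z m hm hz]
  rw [mul_zero, add_zero]
  rw [add_assoc, ← add_smul]
  rw [add_self, zero_smul, add_zero]

end step


section construction

variable (m : ℕ) (hm : m ≤ 10)

lemma eV_j0 : eV m hm (j0 m hm) = 1 := by
  simp [eV, Pi.single_eq_of_ne (j0_ne_j1 m hm)]

lemma fV_ne_zero : fV m hm ≠ 0 := by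
  intro h
  have := fV_j0 m hm
  rw [h] at this
  exact ww_ne_zero this.symm

def IsLag (k : ℕ) (C : Submodule F4 X) : Prop :=
  C ≤ Sm k ∧ (∀ x ∈ C, ∀ y ∈ C, hIP x y = 0) ∧ Module.finrank F4 C = k

variable (C : Submodule F4 X)

noncomputable def Phinone : Submodule F4 X := C ⊔ (F4 ∙ fV m hm)

noncomputable def gV (z : X) (c : F4) : X := eV m hm + z + c • fV m hm

noncomputable def Phisome (z : X) (c : F4) : Submodule F4 X :=
  C.map (Tz m hm z) ⊔ (F4 ∙ gV m hm z c)

lemma mem_Phinone_iff {w : X} :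
    w ∈ Phinone m hm C ↔ ∃ x ∈ C, ∃ a : F4, w = x + a • fV m hm := by
  constructor
  · intro hw
    rcases Submodule.mem_sup.mp hw with ⟨x, hx, v, hv, rfl⟩
    rcases Submodule.mem_span_singleton.mp hv with ⟨a, rfl⟩
    exact ⟨x, hx, a, rfl⟩
  · rintro ⟨x, hx, a, rfl⟩
    exact Submodule.add_mem _ (Submodule.mem_sup_left hx)
      (Submodule.mem_sup_right (Submodule.smul_mem _ _ (Submodule.mem_span_singleton_self _)))

lemma mem_Phisome_iff {z : X} {c : F4} {w : X} :
    w ∈ Phisome m hm C z c ↔ ∃ x ∈ C, ∃ a : F4, w = Tz m hm z x + a • gV m hm z c := by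
  constructor
  · intro hw
    rcases Submodule.mem_sup.mp hw with ⟨u, hu, v, hv, rfl⟩
    rcases Submodule.mem_map.mp hu with ⟨x, hx, rfl⟩
    rcases Submodule.mem_span_singleton.mp hv with ⟨a, rfl⟩
    exact ⟨x, hx, a, rfl⟩
  · rintro ⟨x, hx, a, rfl⟩
    exact Submodule.add_mem _ (Submodule.mem_sup_left (Submodule.mem_map_of_mem hx))
      (Submodule.mem_sup_right (Submodule.smul_mem _ _ (Submodule.mem_span_singleton_self _)))

lemma Af_gV {z : X} (hz : z ∈ Sm m) (c : F4) : Af m hm (gV m hm z c) = 1 := by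
  rw [gV, map_add, map_add, map_smul, Af_eV, Af_Sm m hm hz, Af_fV]
  simp

lemma Af_Tz {z x : X} (hx : x ∈ Sm m) : Af m hm (Tz m hm z x) = 0 := by
  rw [Tz_apply, map_add, map_smul, Af_Sm m hm hx, Af_fV]
  simp

lemma gV_ne_zero {z : X} (hz : z ∈ Sm m) (c : F4) : gV m hm z c ≠ 0 := by
  intro h
  have := Af_gV m hm hz c
  rw [h, map_zero] at this
  exact one_ne_zero this.symm

-- expansion helpers
lemma hIP_right_gV (w z : X) (c : F4) :
    hIP w (gV m hm z c) = hIP w (eV m hm) + hIP w z + c ^ 2 * hIP w (fV m hm) := by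
  rw [gV, hIP_add_right, hIP_add_right, hIP_smul_right]

lemma hIP_left_gV (w z : X) (c : F4) :
    hIP (gV m hm z c) w = hIP (eV m hm) w + hIP z w + c * hIP (fV m hm) w := by
  rw [gV, hIP_add_left, hIP_add_left, hIP_smul_left]

lemma hIP_left_Tz (z x w : X) :
    hIP (Tz m hm z x) w = hIP x w + hIP x z * hIP (fV m hm) w := by
  rw [Tz_apply, hIP_add_left, hIP_smul_left]

lemma hIP_right_Tz (z x w : X) :
    hIP w (Tz m hm z x) = hIP w x + (hIP x z) ^ 2 * hIP w (fV m hm) := by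
  rw [Tz_apply, hIP_add_right, hIP_smul_right]

variable {C}

lemma hIP_x_eV {x : X} (hx : x ∈ Sm m) : hIP x (eV m hm) = 0 :=
  hIP_Sm_zero_left hx (eV_low m hm)
lemma hIP_eV_x {x : X} (hx : x ∈ Sm m) : hIP (eV m hm) x = 0 :=
  hIP_Sm_zero_right hx (eV_low m hm)
lemma hIP_x_fV {x : X} (hx : x ∈ Sm m) : hIP x (fV m hm) = 0 :=
  hIP_Sm_zero_left hx (fV_low m hm)
lemma hIP_fV_x {x : X} (hx : x ∈ Sm m) : hIP (fV m hm) x = 0 :=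
  hIP_Sm_zero_right hx (fV_low m hm)

lemma hIP_gV_gV {z : X} (hz : z ∈ Sm m) {c : F4} (hc : c ^ 2 + c = hIP z z) :
    hIP (gV m hm z c) (gV m hm z c) = 0 := by
  rw [hIP_left_gV, hIP_right_gV, hIP_right_gV, hIP_right_gV]
  rw [hIP_eV_eV, hIP_eV_x m hm hz, hIP_eV_fV, hIP_x_eV m hm hz, hIP_x_fV m hm hz,
    hIP_fV_eV, hIP_fV_x m hm hz, hIP_fV_fV]
  linear_combination hc + add_self (hIP z z)

lemma hIP_Tz_gV (hC : IsLag m C) {z : X} (hz : z ∈ Sm m) {c : F4} {x : X} (hx : x ∈ C) :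
    hIP (Tz m hm z x) (gV m hm z c) = 0 := by
  have hxS : x ∈ Sm m := hC.1 hx
  rw [hIP_left_Tz, hIP_right_gV, hIP_right_gV]
  rw [hIP_x_eV m hm hxS, hIP_x_fV m hm hxS, hIP_fV_eV, hIP_fV_x m hm hz, hIP_fV_fV]
  linear_combination add_self (hIP x z)

lemma hIP_gV_Tz (hC : IsLag m C) {z : X} (hz : z ∈ Sm m) {c : F4} {x : X} (hx : x ∈ C) :
    hIP (gV m hm z c) (Tz m hm z x) = 0 := by
  have hxS : x ∈ Sm m := hC.1 hx
  rw [hIP_right_Tz, hIP_left_gV, hIP_left_gV]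
  rw [hIP_eV_x m hm hxS, hIP_eV_fV, hIP_fV_x m hm hxS, hIP_fV_fV, hIP_x_fV m hm hz]
  have hswap : hIP z x = hIP x z ^ 2 := hIP_swap x z
  rw [hswap]
  linear_combination add_self (hIP x z ^ 2)

lemma hIP_Tz_Tz (hC : IsLag m C) {z : X} {x y : X} (hx : x ∈ C) (hy : y ∈ C) :
    hIP (Tz m hm z x) (Tz m hm z y) = 0 := by
  have hxS : x ∈ Sm m := hC.1 hx
  have hyS : y ∈ Sm m := hC.1 hy
  rw [hIP_left_Tz, hIP_right_Tz, hIP_right_Tz]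
  rw [hC.2.1 x hx y hy, hIP_x_fV m hm hxS, hIP_fV_x m hm hyS, hIP_fV_fV]
  ring

noncomputable def TzEquiv (z : X) (hz : z ∈ Sm m) : X ≃ₗ[F4] X :=
  LinearEquiv.ofLinear (Tz m hm z) (Tz m hm z)
    (LinearMap.ext fun x => Tz_invol m hm hz x)
    (LinearMap.ext fun x => Tz_invol m hm hz x)

lemma finrank_map_Tz (z : X) (hz : z ∈ Sm m) (W : Submodule F4 X) :
    Module.finrank F4 (W.map (Tz m hm z)) = Module.finrank F4 W := by
  have h : W.map (Tz m hm z) = W.map ((TzEquiv m hm z hz : X ≃ₗ[F4] X) : X →ₗ[F4] X) := rfl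
  rw [h, LinearEquiv.finrank_map_eq]

lemma isLag_Phinone (hC : IsLag m C) : IsLag (m + 1) (Phinone m hm C) := by
  refine ⟨?_, ?_, ?_⟩
  · refine sup_le (hC.1.trans (Sm_mono (by omega))) ?_
    rw [Submodule.span_le]
    intro v hv
    rw [Set.mem_singleton_iff] at hv
    subst hv
    exact fV_mem m hm
  · intro w hw w' hw'
    rcases (mem_Phinone_iff m hm C).mp hw with ⟨x, hx, a, rfl⟩
    rcases (mem_Phinone_iff m hm C).mp hw' with ⟨y, hy, b, rfl⟩
    rw [hIP_add_left, hIP_add_right, hIP_add_right, hIP_smul_left, hIP_smul_left,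
      hIP_smul_right, hIP_smul_right]
    rw [hC.2.1 x hx y hy, hIP_x_fV m hm (hC.1 hx), hIP_fV_x m hm (hC.1 hy), hIP_fV_fV]
    ring
  · have hinf : C ⊓ (F4 ∙ fV m hm) = ⊥ := by
      rw [Submodule.eq_bot_iff]
      rintro w ⟨hwC, hwS⟩
      rcases Submodule.mem_span_singleton.mp hwS with ⟨a, rfl⟩
      have h0 : (a • fV m hm) (j0 m hm) = 0 := Sm_val_j0 m hm (hC.1 hwC)
      rw [Pi.smul_apply, fV_j0, smul_eq_mul] at h0
      rcases mul_eq_zero.mp h0 with h | h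
      · rw [h, zero_smul]
      · exact absurd h ww_ne_zero
    have := Submodule.finrank_sup_add_finrank_inf_eq C (F4 ∙ fV m hm)
    rw [hinf, finrank_bot, add_zero, hC.2.2, finrank_span_singleton (fV_ne_zero m hm)] at this
    exact this

lemma isLag_Phisome (hC : IsLag m C) {z : X} (hz : z ∈ Sm m) {c : F4}
    (hc : c ^ 2 + c = hIP z z) : IsLag (m + 1) (Phisome m hm C z c) := by
  have hgS : gV m hm z c ∈ Sm (m + 1) := by
    refine Submodule.add_mem _ (Submodule.add_mem _ (eV_mem m hm) (Sm_mono (by omega) hz)) ?_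
    exact Submodule.smul_mem _ _ (fV_mem m hm)
  refine ⟨?_, ?_, ?_⟩
  · refine sup_le ?_ ?_
    · rintro w hw
      rcases Submodule.mem_map.mp hw with ⟨x, hx, rfl⟩
      rw [Tz_apply]
      exact Submodule.add_mem _ (Sm_mono (by omega) (hC.1 hx))
        (Submodule.smul_mem _ _ (fV_mem m hm))
    · rw [Submodule.span_le]
      intro v hv
      rw [Set.mem_singleton_iff] at hv
      subst hv
      exact hgS
  · intro w hw w' hw'
    rcases (mem_Phisome_iff m hm C).mp hw with ⟨x, hx, a, rfl⟩
    rcases (mem_Phisome_iff m hm C).mp hw' with ⟨y, hy, b, rfl⟩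
    rw [hIP_add_left, hIP_add_right, hIP_add_right, hIP_smul_left, hIP_smul_left,
      hIP_smul_right, hIP_smul_right]
    rw [hIP_Tz_Tz m hm hC hx hy, hIP_Tz_gV m hm hC hz hx, hIP_gV_Tz m hm hC hz hy,
      hIP_gV_gV m hm hz hc]
    ring
  · have hinf : C.map (Tz m hm z) ⊓ (F4 ∙ gV m hm z c) = ⊥ := by
      rw [Submodule.eq_bot_iff]
      rintro w ⟨hwC, hwS⟩
      rcases Submodule.mem_span_singleton.mp hwS with ⟨a, rfl⟩
      rcases Submodule.mem_map.mp hwC with ⟨x, hx, hTx⟩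
      have h1 : Af m hm (a • gV m hm z c) = 0 := by
        rw [← hTx, Af_Tz m hm (hC.1 hx)]
      rw [map_smul, Af_gV m hm hz, smul_eq_mul, mul_one] at h1
      rw [h1, zero_smul]
    have := Submodule.finrank_sup_add_finrank_inf_eq (C.map (Tz m hm z)) (F4 ∙ gV m hm z c)
    rw [hinf, finrank_bot, add_zero, finrank_map_Tz m hm z hz, hC.2.2,
      finrank_span_singleton (gV_ne_zero m hm hz c)] at this
    exact this

end construction


lemma hIP_zero_left {n : ℕ} (y : Fin n → F4) : hIP 0 y = 0 := by simp [hIP]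

section recovery

variable (m : ℕ) (hm : m ≤ 10) {C C' : Submodule F4 X}

lemma Pt_Tz {z x : X} (hx : x ∈ Sm m) : Pt m hm (Tz m hm z x) = x := by
  rw [Tz_apply, map_add, map_smul, Pt_Sm m hm hx, Pt_fV, smul_zero, add_zero]

lemma rec_none (hC : IsLag m C) : Phinone m hm C ⊓ Sm m = C := by
  apply le_antisymm
  · rintro w ⟨hw1, hw2⟩
    rcases (mem_Phinone_iff m hm C).mp hw1 with ⟨x, hx, a, rfl⟩
    have h0 := Sm_val_j0 m hm hw2
    have hx0 : x (j0 m hm) = 0 := Sm_val_j0 m hm (hC.1 hx)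
    rw [Pi.add_apply, hx0, zero_add, Pi.smul_apply, fV_j0, smul_eq_mul] at h0
    rcases mul_eq_zero.mp h0 with h | h
    · rw [h, zero_smul, add_zero]; exact hx
    · exact absurd h ww_ne_zero
  · exact le_inf le_sup_left hC.1

lemma rec_some (hC : IsLag m C) {z : X} (hz : z ∈ Sm m) (c : F4) :
    (Phisome m hm C z c ⊓ LinearMap.ker (Af m hm)).map (Pt m hm) = C := by
  apply le_antisymm
  · rintro y ⟨w, ⟨hw1, hw2⟩, rfl⟩
    rcases (mem_Phisome_iff m hm C).mp hw1 with ⟨x, hx, a, rfl⟩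
    have ha : a = 0 := by
      have h2 := LinearMap.mem_ker.mp hw2
      rw [map_add, Af_Tz m hm (hC.1 hx), map_smul, Af_gV m hm hz, smul_eq_mul, mul_one,
        zero_add] at h2
      exact h2
    rw [ha, zero_smul, add_zero, Pt_Tz m hm (hC.1 hx)]
    exact hx
  · intro y hy
    refine ⟨Tz m hm z y, ⟨Submodule.mem_sup_left (Submodule.mem_map_of_mem hy),
      LinearMap.mem_ker.mpr (Af_Tz m hm (hC.1 hy))⟩, Pt_Tz m hm (hC.1 hy)⟩

lemma none_ne_some (hC' : IsLag m C') {z : X} (hz : z ∈ Sm m) (c : F4) :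
    Phinone m hm C' ≠ Phisome m hm C z c := by
  intro h
  have hg : gV m hm z c ∈ Phisome m hm C z c :=
    Submodule.mem_sup_right (Submodule.mem_span_singleton_self _)
  rw [← h] at hg
  rcases (mem_Phinone_iff m hm C').mp hg with ⟨x, hx, a, hEq⟩
  have h1 := congrArg (Af m hm) hEq
  rw [Af_gV m hm hz, map_add, Af_Sm m hm (hC'.1 hx), map_smul, Af_fV, smul_zero,
    add_zero] at h1
  exact one_ne_zero h1

lemma some_inj (hC : IsLag m C) {z z' : X} (hz : z ∈ Sm m) (hz' : z' ∈ Sm m) {c c' : F4}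
    (h : Phisome m hm C z c = Phisome m hm C z' c') :
    z - z' ∈ C ∧ (z = z' → c = c') := by
  have hg : gV m hm z c ∈ Phisome m hm C z' c' := by
    rw [← h]
    exact Submodule.mem_sup_right (Submodule.mem_span_singleton_self _)
  rcases (mem_Phisome_iff m hm C).mp hg with ⟨x, hx, a, hE⟩
  have ha : a = 1 := by
    have h1 := congrArg (Af m hm) hE
    rw [Af_gV m hm hz, map_add, Af_Tz m hm (hC.1 hx), map_smul, Af_gV m hm hz',
      smul_eq_mul, mul_one, zero_add] at h1
    exact h1.symm
  rw [ha, one_smul] at hE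
  have hE' : eV m hm + z + c • fV m hm =
      (x + hIP x z' • fV m hm) + (eV m hm + z' + c' • fV m hm) := by
    simpa [gV, Tz_apply] using hE
  have hxv : x = z - z' + ((c - c' - hIP x z') • fV m hm) := by
    linear_combination (norm := module) -hE'
  have h0 := congrFun hxv (j0 m hm)
  rw [Pi.add_apply, Pi.sub_apply, Sm_val_j0 m hm (hC.1 hx), Sm_val_j0 m hm hz,
    Sm_val_j0 m hm hz', Pi.smul_apply, fV_j0, smul_eq_mul, sub_zero, zero_add] at h0
  have hcoef : c - c' - hIP x z' = 0 := by
    rcases mul_eq_zero.mp h0.symm with h' | h'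
    · exact h'
    · exact absurd h' ww_ne_zero
  rw [hcoef, zero_smul, add_zero] at hxv
  constructor
  · rw [← hxv]; exact hx
  · intro hzz
    rw [hzz, sub_self] at hxv
    rw [hxv, hIP_zero_left] at hcoef
    linear_combination hcoef

end recovery

section lagcount

instance : Finite (Submodule F4 X) :=
  Finite.of_injective (fun W => (W : Set X)) SetLike.coe_injective

def Lag (k : ℕ) : Type := {C : Submodule F4 X // IsLag k C}

instance (k : ℕ) : Finite (Lag k) := by
  unfold Lag; infer_instance

noncomputable def cmod (m : ℕ) (C : Submodule F4 X) : Submodule F4 ↥(Sm m) :=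
  C.comap (Sm m).subtype

noncomputable def cOf (z : X) (t : Bool) : F4 :=
  if hIP z z = 0 then (if t then 0 else 1) else (if t then ww else ww ^ 2)

lemma ww_ne_ww_sq : ww ≠ ww ^ 2 := by
  intro hh
  have h1 : ww * 1 = ww * ww := by rw [mul_one, ← sq]; exact hh
  exact ww_ne_one (mul_left_cancel₀ ww_ne_zero h1).symm

lemma sq_sq_ww : (ww ^ 2) ^ 2 = ww := by rw [← pow_mul]; exact F4pow4 ww

lemma cOf_spec (z : X) (t : Bool) : (cOf z t) ^ 2 + cOf z t = hIP z z := by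
  rcases hIP_self_cases z with h | h
  · rw [cOf, if_pos h, h]
    cases t
    · simp only [Bool.false_eq_true, if_false, one_pow]; exact add_self 1
    · simp
  · have hne : hIP z z ≠ 0 := by rw [h]; exact one_ne_zero
    rw [cOf, if_neg hne, h]
    cases t
    · simp only [Bool.false_eq_true, if_false, sq_sq_ww]
      exact ww_add_sq
    · simp only [if_true]
      rw [add_comm]; exact ww_add_sq

lemma cOf_inj (z : X) {t t' : Bool} (h : cOf z t = cOf z t') : t = t' := by
  simp only [cOf] at h
  by_cases h0 : hIP z z = 0
  · rw [if_pos h0, if_pos h0] at h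
    cases t <;> cases t' <;> simp_all
  · rw [if_neg h0, if_neg h0] at h
    have := ww_ne_ww_sq
    cases t <;> cases t' <;> simp_all

noncomputable def zOf {m : ℕ} {C : Submodule F4 X} (q : ↥(Sm m) ⧸ cmod m C) : X :=
  ((Quotient.out q : ↥(Sm m)) : X)

lemma zOf_mem {m : ℕ} {C : Submodule F4 X} (q : ↥(Sm m) ⧸ cmod m C) : zOf q ∈ Sm m :=
  (Quotient.out q).2

lemma zOf_inj {m : ℕ} {C : Submodule F4 X} {q q' : ↥(Sm m) ⧸ cmod m C}
    (h : zOf q - zOf q' ∈ C) : q = q' := by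
  have hmem : (Quotient.out q : ↥(Sm m)) - Quotient.out q' ∈ cmod m C := by
    show ((Sm m).subtype) ((Quotient.out q : ↥(Sm m)) - Quotient.out q') ∈ C
    rw [map_sub]
    exact h
  have h2 : (Submodule.Quotient.mk (Quotient.out q) : ↥(Sm m) ⧸ cmod m C) =
      Submodule.Quotient.mk (Quotient.out q') := (Submodule.Quotient.eq _).mpr hmem
  rwa [Submodule.Quotient.mk, Quotient.out_eq', Quotient.out_eq'] at h2

def DT (m : ℕ) : Type := Σ CL : Lag m, Option ((↥(Sm m) ⧸ cmod m CL.1) × Bool)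

noncomputable def stepMap (m : ℕ) (hm : m ≤ 10) : DT m → Lag (m + 1) :=
  fun d =>
    match d with
    | ⟨CL, none⟩ => ⟨Phinone m hm CL.1, isLag_Phinone m hm CL.2⟩
    | ⟨CL, some (q, t)⟩ => ⟨Phisome m hm CL.1 (zOf q) (cOf (zOf q) t),
        isLag_Phisome m hm CL.2 (zOf_mem q) (cOf_spec _ t)⟩

lemma stepMap_inj (m : ℕ) (hm : m ≤ 10) : Function.Injective (stepMap m hm) := by
  rintro ⟨CL, o1⟩ ⟨CL', o2⟩ h
  match o1, o2 with
  | none, none =>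
      have h2 : Phinone m hm CL.1 = Phinone m hm CL'.1 := congrArg Subtype.val h
      have hCC : CL = CL' := by
        apply Subtype.ext
        rw [← rec_none m hm CL.2, ← rec_none m hm CL'.2, h2]
      subst hCC
      rfl
  | none, some (q, t) =>
      have h2 : Phinone m hm CL.1 = Phisome m hm CL'.1 (zOf q) (cOf (zOf q) t) :=
        congrArg Subtype.val h
      exact absurd h2 (none_ne_some m hm CL.2 (zOf_mem q) _)
  | some (q, t), none =>
      have h2 : Phinone m hm CL'.1 = Phisome m hm CL.1 (zOf q) (cOf (zOf q) t) :=
        (congrArg Subtype.val h).symm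
      exact absurd h2 (none_ne_some m hm CL'.2 (zOf_mem q) _)
  | some (q, t), some (q', t') =>
      have h2 : Phisome m hm CL.1 (zOf q) (cOf (zOf q) t) =
          Phisome m hm CL'.1 (zOf q') (cOf (zOf q') t') := congrArg Subtype.val h
      have hCC : CL = CL' := by
        apply Subtype.ext
        rw [← rec_some m hm CL.2 (zOf_mem q) (cOf (zOf q) t),
          ← rec_some m hm CL'.2 (zOf_mem q') (cOf (zOf q') t'), h2]
      subst hCC
      obtain ⟨hsub, himp⟩ := some_inj m hm CL.2 (zOf_mem q) (zOf_mem q') h2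
      have hq : q = q' := zOf_inj hsub
      subst hq
      have ht : t = t' := cOf_inj _ (himp rfl)
      subst ht
      rfl

end lagcount


section counting

noncomputable def SmEquiv (m : ℕ) (hm : m ≤ 11) : ↥(Sm m) ≃ₗ[F4] (Fin (2 * m) → F4) where
  toFun x := fun j => (x : X) (Fin.castLE (by omega) j)
  map_add' := by intro x y; rfl
  map_smul' := by intro c x; rfl
  invFun y := ⟨fun i => if h : (i : ℕ) < 2 * m then y ⟨(i : ℕ), h⟩ else 0, by
    intro i hi; exact dif_neg (by omega)⟩
  left_inv := by
    rintro ⟨x, hx⟩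
    apply Subtype.ext
    funext i
    show (if h : (i : ℕ) < 2 * m then x (Fin.castLE (by omega) ⟨(i : ℕ), h⟩) else 0) = x i
    by_cases h : (i : ℕ) < 2 * m
    · rw [dif_pos h]
      exact congrArg x (Fin.ext rfl)
    · rw [dif_neg h]
      exact (hx i (by omega)).symm
  right_inv := by
    intro y
    funext j
    show (if h : ((Fin.castLE (by omega : 2*m ≤ 22) j : Fin 22) : ℕ) < 2 * m
        then y ⟨((Fin.castLE (by omega : 2*m ≤ 22) j : Fin 22) : ℕ), h⟩ else 0) = y j
    rw [dif_pos (by simpa using j.2)]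
    exact congrArg y (Fin.ext rfl)

lemma card_submodule (W : Submodule F4 X) : Nat.card W = 4 ^ (Module.finrank F4 W) := by
  haveI : Fintype W := Fintype.ofFinite _
  rw [Nat.card_eq_fintype_card, Module.card_eq_pow_finrank (K := F4) (V := W), F4card]

lemma card_Sm (m : ℕ) (hm : m ≤ 11) : Nat.card ↥(Sm m) = 4 ^ (2 * m) := by
  rw [Nat.card_congr (SmEquiv m hm).toEquiv]
  rw [Nat.card_pi]
  simp [Nat.card_eq_fintype_card, F4card]

lemma card_quot (m : ℕ) (hm : m ≤ 10) {C : Submodule F4 X} (hC : IsLag m C) :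
    Nat.card (↥(Sm m) ⧸ cmod m C) = 4 ^ m := by
  have h1 := Submodule.card_eq_card_quotient_mul_card (cmod m C)
  have h2 : Nat.card (cmod m C) = 4 ^ m := by
    show Nat.card ↥(C.comap (Sm m).subtype) = 4 ^ m
    rw [Nat.card_congr (Submodule.comapSubtypeEquivOfLe hC.1).toEquiv, card_submodule, hC.2.2]
  rw [card_Sm m (by omega), h2] at h1
  have h3 : (4:ℕ) ^ (2 * m) = 4 ^ m * 4 ^ m := by rw [← pow_add]; ring_nf
  rw [h3] at h1
  have h4 : 0 < (4:ℕ) ^ m := by positivity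
  exact (Nat.eq_of_mul_eq_mul_left h4 h1.symm)

instance instFinQuot (m : ℕ) (C : Submodule F4 X) : Finite (↥(Sm m) ⧸ cmod m C) :=
  Finite.of_surjective (Submodule.Quotient.mk (p := cmod m C))
    (Submodule.Quotient.mk_surjective _)

lemma card_DT (m : ℕ) (hm : m ≤ 10) :
    Nat.card (DT m) = Nat.card (Lag m) * (2 ^ (2 * m + 1) + 1) := by
  haveI : Fintype (Lag m) := Fintype.ofFinite _
  haveI : ∀ CL : Lag m, Fintype (Option ((↥(Sm m) ⧸ cmod m CL.1) × Bool)) :=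
    fun CL =>
      haveI : Fintype (↥(Sm m) ⧸ cmod m CL.1) := Fintype.ofFinite _
      inferInstance
  unfold DT
  rw [Nat.card_eq_fintype_card, Fintype.card_sigma]
  have hterm : ∀ CL : Lag m,
      Fintype.card (Option ((↥(Sm m) ⧸ cmod m CL.1) × Bool)) = 2 ^ (2 * m + 1) + 1 := by
    intro CL
    rw [← Nat.card_eq_fintype_card, Finite.card_option, Nat.card_prod,
      card_quot m hm CL.2]
    have : Nat.card Bool = 2 := by simp [Nat.card_eq_fintype_card]
    rw [this]
    have : (4:ℕ) ^ m * 2 = 2 ^ (2 * m + 1) := by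
      rw [show (4:ℕ) = 2^2 by norm_num, ← pow_mul, pow_succ]
    rw [this]
  rw [Finset.sum_congr rfl (fun CL _ => hterm CL), Finset.sum_const, Finset.card_univ,
    smul_eq_mul, Nat.card_eq_fintype_card]

lemma lag_zero_nonempty : Nonempty (Lag 0) := by
  refine ⟨⟨⊥, bot_le, ?_, finrank_bot F4 X⟩⟩
  intro x hx y hy
  rw [Submodule.mem_bot] at hx
  rw [hx, hIP_zero_left]

lemma lag_lower : ∀ m : ℕ, m ≤ 11 →
    (∏ i ∈ Finset.range m, (2 ^ (2 * i + 1) + 1)) ≤ Nat.card (Lag m) := by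
  intro m
  induction m with
  | zero =>
      intro _
      simpa using Nat.one_le_iff_ne_zero.mpr (Nat.card_ne_zero.mpr ⟨lag_zero_nonempty, inferInstance⟩)
  | succ m ih =>
      intro hm
      have hm' : m ≤ 10 := by omega
      calc (∏ i ∈ Finset.range (m+1), (2 ^ (2 * i + 1) + 1))
          = (∏ i ∈ Finset.range m, (2 ^ (2 * i + 1) + 1)) * (2 ^ (2 * m + 1) + 1) := by
            rw [Finset.prod_range_succ]
        _ ≤ Nat.card (Lag m) * (2 ^ (2 * m + 1) + 1) :=
            Nat.mul_le_mul_right _ (ih (by omega))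
        _ = Nat.card (DT m) := (card_DT m hm').symm
        _ ≤ Nat.card (Lag (m + 1)) :=
            Nat.card_le_card_of_injective (stepMap m hm') (stepMap_inj m hm')

end counting


section dual

noncomputable def Bf : LinearMap.BilinForm F4 X :=
  LinearMap.mk₂ F4 (fun x y => ∑ i, x i * y i)
    (by intro x x' y; simp [add_mul, Finset.sum_add_distrib])
    (by intro c x y; simp [Finset.mul_sum, mul_assoc])
    (by intro x y y'; simp [mul_add, Finset.sum_add_distrib])
    (by intro c x y; simp [Finset.mul_sum]; refine Finset.sum_congr rfl fun i _ => ?_; ring)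

lemma Bf_apply (x y : X) : Bf x y = ∑ i, x i * y i := rfl

lemma Bf_refl : Bf.IsRefl := by
  intro x y h
  rw [Bf_apply] at h ⊢
  rw [← h]
  exact Finset.sum_congr rfl fun i _ => mul_comm _ _

lemma Bf_nondeg : Bf.Nondegenerate := by
  have hL : Bf.SeparatingLeft := by
    intro x hx
    funext i
    have h := hx (Pi.single i 1)
    rw [Bf_apply] at h
    rw [Finset.sum_eq_single i] at h
    · simpa using h
    · intro k _ hk
      simp [Pi.single_eq_of_ne hk]
    · simp
  exact ⟨hL, fun y hy => hL y fun x => Bf_refl _ _ (hy x)⟩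

noncomputable def frobF : X → X := fun x => fun i => (x i) ^ 2

lemma frobF_inj : Function.Injective frobF := by
  intro a b hab
  funext i
  have h : (a i) ^ 2 = (b i) ^ 2 := congrFun hab i
  have h2 : (a i - b i) ^ 2 = 0 := by
    linear_combination h + (b i ^ 2 - a i * b i) * two_eq_zero
  have h3 := pow_eq_zero_iff (n := 2) (by norm_num) |>.mp h2
  exact sub_eq_zero.mp h3

noncomputable def frobC (C : Submodule F4 X) : Submodule F4 X where
  carrier := frobF '' (C : Set X)
  add_mem' := by
    rintro _ _ ⟨a, ha, rfl⟩ ⟨b, hb, rfl⟩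
    refine ⟨a + b, C.add_mem ha hb, ?_⟩
    funext i
    show ((a + b) i) ^ 2 = (a i) ^ 2 + (b i) ^ 2
    rw [Pi.add_apply]
    have : (a i + b i) ^ 2 = (a i) ^ 2 + (b i) ^ 2 + 2 * (a i * b i) := by ring
    rw [this, two_eq_zero]
    ring
  zero_mem' := ⟨0, C.zero_mem, by funext i; simp [frobF]⟩
  smul_mem' := by
    rintro c _ ⟨a, ha, rfl⟩
    refine ⟨c ^ 2 • a, C.smul_mem _ ha, ?_⟩
    funext i
    show ((c ^ 2 • a) i) ^ 2 = c * (a i) ^ 2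
    rw [Pi.smul_apply, smul_eq_mul]
    have : (c ^ 2 * a i) ^ 2 = c ^ 4 * (a i) ^ 2 := by ring
    rw [this, F4pow4]

lemma mem_frobC {C : Submodule F4 X} {w : X} :
    w ∈ frobC C ↔ ∃ c ∈ C, frobF c = w := Iff.rfl

lemma hDual_eq (C : Submodule F4 X) : hDual C = Bf.orthogonal (frobC C) := by
  ext x
  constructor
  · intro hx
    intro n hn
    rcases mem_frobC.mp hn with ⟨c, hc, rfl⟩
    show Bf (frobF c) x = 0
    rw [Bf_apply]
    have h := hx c hc
    rw [hIP] at h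
    rw [← h]
    exact Finset.sum_congr rfl fun i _ => mul_comm _ _
  · intro hx
    intro c hc
    have h : Bf (frobF c) x = 0 := hx (frobF c) ⟨c, hc, rfl⟩
    rw [Bf_apply] at h
    show hIP x c = 0
    rw [hIP, ← h]
    exact Finset.sum_congr rfl fun i _ => mul_comm _ _

lemma finrank_frobC (C : Submodule F4 X) :
    Module.finrank F4 (frobC C) = Module.finrank F4 C := by
  have hcard : Nat.card (frobC C) = Nat.card C := by
    exact (Nat.card_congr (Equiv.Set.image frobF (C : Set X) frobF_inj)).symm
  rw [card_submodule, card_submodule] at hcard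
  exact Nat.pow_right_injective (by norm_num) hcard

lemma finrank_hDual (C : Submodule F4 X) :
    Module.finrank F4 (hDual C) = 22 - Module.finrank F4 C := by
  rw [hDual_eq, LinearMap.BilinForm.finrank_orthogonal Bf_nondeg, finrank_frobC]
  congr 1
  exact Module.finrank_fin_fun F4

lemma isLag_self_dual {C : Submodule F4 X} (hC : IsLag 11 C) : C = hDual C := by
  have hle : C ≤ hDual C := by
    intro x hx
    show ∀ c ∈ C, hIP x c = 0
    intro c hc
    exact hC.2.1 x hx c hc
  have hfr : Module.finrank F4 (hDual C) ≤ Module.finrank F4 C := by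
    rw [finrank_hDual, hC.2.2]
  exact Submodule.eq_of_le_of_finrank_le hle hfr

end dual


section equivrel

lemma monomialMap_apply {n : ℕ} (π : Equiv.Perm (Fin n)) (s : Fin n → F4ˣ) (x : Fin n → F4)
    (i : Fin n) : monomialMap π s x i = (s i : F4) * x (π i) := rfl

lemma monomial_comp {n : ℕ} (π₁ π₂ : Equiv.Perm (Fin n)) (s₁ s₂ : Fin n → F4ˣ) :
    (monomialMap π₂ s₂).comp (monomialMap π₁ s₁) =
      monomialMap (π₂.trans π₁) (fun i => s₂ i * s₁ (π₂ i)) := by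
  apply LinearMap.ext
  intro x
  funext i
  show (s₂ i : F4) * ((fun j => (s₁ j : F4) * x (π₁ j)) (π₂ i)) = _
  show (s₂ i : F4) * ((s₁ (π₂ i) : F4) * x (π₁ (π₂ i))) =
    ((s₂ i * s₁ (π₂ i) : F4ˣ) : F4) * x ((π₂.trans π₁) i)
  rw [Units.val_mul, mul_assoc]
  rfl

lemma monomial_one {n : ℕ} : monomialMap (n := n) 1 1 = LinearMap.id := by
  apply LinearMap.ext
  intro x
  funext i
  show ((1 : F4ˣ) : F4) * x ((1 : Equiv.Perm (Fin n)) i) = x i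
  simp

lemma codeEquiv_refl {n : ℕ} (C : Submodule F4 (Fin n → F4)) : CodeEquiv C C :=
  ⟨1, 1, by rw [monomial_one, Submodule.map_id]⟩

lemma codeEquiv_trans {n : ℕ} {C C' C'' : Submodule F4 (Fin n → F4)}
    (h1 : CodeEquiv C C') (h2 : CodeEquiv C' C'') : CodeEquiv C C'' := by
  obtain ⟨π₁, s₁, hm1⟩ := h1
  obtain ⟨π₂, s₂, hm2⟩ := h2
  refine ⟨π₂.trans π₁, fun i => s₂ i * s₁ (π₂ i), ?_⟩
  rw [← monomial_comp, Submodule.map_comp, hm1, hm2]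

lemma codeEquiv_symm {n : ℕ} {C C' : Submodule F4 (Fin n → F4)}
    (h : CodeEquiv C C') : CodeEquiv C' C := by
  obtain ⟨π, s, hm⟩ := h
  refine ⟨π.symm, fun i => (s (π.symm i))⁻¹, ?_⟩
  rw [← hm, ← Submodule.map_comp]
  have hcomp : (monomialMap π.symm (fun i => (s (π.symm i))⁻¹)).comp (monomialMap π s) =
      LinearMap.id := by
    apply LinearMap.ext
    intro x
    funext i
    show ((s (π.symm i))⁻¹ : F4ˣ).1 * ((s (π.symm i) : F4) * x (π (π.symm i))) = x i
    rw [← mul_assoc]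
    norm_cast
    rw [inv_mul_cancel]
    simp
  rw [hcomp, Submodule.map_id]

abbrev SD : Type := {C : Submodule F4 X // C = hDual C}

def rel : SD → SD → Prop := fun C C' => CodeEquiv C.1 C'.1

lemma rel_equivalence : Equivalence rel :=
  ⟨fun C => codeEquiv_refl C.1, fun h => codeEquiv_symm h, fun h1 h2 => codeEquiv_trans h1 h2⟩

instance : Finite SD := Subtype.finite

instance : Finite (Quot rel) := Finite.of_surjective (Quot.mk rel) Quot.mk_surjective

lemma codeEquiv_norm {C C' : Submodule F4 X} (h : CodeEquiv C C') :
    ∃ (π : Equiv.Perm (Fin 22)) (s : Fin 22 → F4ˣ), s 0 = 1 ∧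
      C.map (monomialMap π s) = C' := by
  obtain ⟨π, s, hmap⟩ := h
  refine ⟨π, fun i => (s 0)⁻¹ * s i, by simp, ?_⟩
  have pt : ∀ x : X, monomialMap π (fun i => (s 0)⁻¹ * s i) x =
      monomialMap π s (((((s 0)⁻¹ : F4ˣ) : F4)) • x) := by
    intro x
    funext i
    show (((s 0)⁻¹ * s i : F4ˣ) : F4) * x (π i) = (s i : F4) * ((((s 0)⁻¹ : F4ˣ) : F4) • x) (π i)
    rw [Units.val_mul, Pi.smul_apply, smul_eq_mul]
    ring
  have key : C.map (monomialMap π (fun i => (s 0)⁻¹ * s i)) = C.map (monomialMap π s) := by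
    apply le_antisymm
    · rintro _ ⟨x, hx, rfl⟩
      rw [pt x]
      exact ⟨(((s 0)⁻¹ : F4ˣ) : F4) • x, C.smul_mem _ hx, rfl⟩
    · rintro _ ⟨x, hx, rfl⟩
      refine ⟨((s 0 : F4ˣ) : F4) • x, C.smul_mem _ hx, ?_⟩
      rw [pt]
      congr 1
      rw [smul_smul]
      norm_cast
      rw [inv_mul_cancel]
      simp
  rw [key, hmap]

noncomputable def normPairs : Type := Equiv.Perm (Fin 22) × {s : Fin 22 → F4ˣ // s 0 = 1}

noncomputable def normPairsEquiv : {s : Fin 22 → F4ˣ // s 0 = 1} ≃ ({i : Fin 22 // i ≠ 0} → F4ˣ) where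
  toFun s := fun i => s.1 i.1
  invFun t := ⟨fun i => if h : i = 0 then 1 else t ⟨i, h⟩, by simp⟩
  left_inv := by
    rintro ⟨s, hs⟩
    apply Subtype.ext
    funext i
    show (if h : i = 0 then 1 else s i) = s i
    by_cases h : i = 0
    · rw [dif_pos h]; subst h; exact hs.symm
    · rw [dif_neg h]
  right_inv := by
    intro t
    funext i
    show (if h : (i : Fin 22) = 0 then 1 else t ⟨(i : Fin 22), h⟩) = t i
    rw [dif_neg i.2]

lemma card_F4units : Nat.card F4ˣ = 3 := by
  rw [Nat.card_eq_fintype_card, Fintype.card_units, F4card]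

lemma card_normS : Nat.card {s : Fin 22 → F4ˣ // s 0 = 1} = 3 ^ 21 := by
  rw [Nat.card_congr normPairsEquiv, Nat.card_pi]
  have h1 : ∀ i : {i : Fin 22 // i ≠ 0}, Nat.card F4ˣ = 3 := fun _ => card_F4units
  rw [Finset.prod_congr rfl (fun i _ => h1 i), Finset.prod_const, Finset.card_univ]
  have h2 : Fintype.card {i : Fin 22 // i ≠ 0} = 21 := by
    rw [Fintype.card_subtype_compl]
    simp
  rw [h2]

lemma card_SD_le : Nat.card SD ≤ Nat.card (Quot rel) * (Nat.factorial 22 * 3 ^ 21) := by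
  classical
  have hex : ∀ C : SD, ∃ p : Equiv.Perm (Fin 22) × {s : Fin 22 → F4ˣ // s 0 = 1},
      ((Quot.mk rel C).out).1.map (monomialMap p.1 p.2.1) = C.1 := by
    intro C
    have h1 : Quot.mk rel ((Quot.mk rel C).out) = Quot.mk rel C := Quot.out_eq _
    have h2 : rel ((Quot.mk rel C).out) C :=
      (rel_equivalence.eqvGen_iff).mp (Quot.eq.mp h1)
    obtain ⟨π, s, hs, hmap⟩ := codeEquiv_norm h2
    exact ⟨(π, ⟨s, hs⟩), hmap⟩
  choose f hf using hex
  have hinj : Function.Injective (fun C : SD => (Quot.mk rel C, f C)) := by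
    intro C C' h
    rw [Prod.mk.injEq] at h
    apply Subtype.ext
    rw [← hf C, ← hf C', h.1, h.2]
  calc Nat.card SD
      ≤ Nat.card ((Quot rel) × (Equiv.Perm (Fin 22) × {s : Fin 22 → F4ˣ // s 0 = 1})) :=
        Nat.card_le_card_of_injective _ hinj
    _ = Nat.card (Quot rel) * (Nat.factorial 22 * 3 ^ 21) := by
        rw [Nat.card_prod, Nat.card_prod, card_normS]
        congr 2
        rw [Nat.card_eq_fintype_card, Fintype.card_perm, Fintype.card_fin]

lemma lag_to_SD : Nat.card (Lag 11) ≤ Nat.card SD := by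
  refine Nat.card_le_card_of_injective (fun CL => ⟨CL.1, isLag_self_dual CL.2⟩) ?_
  intro a b h
  have h2 := Subtype.ext_iff.mp h
  exact Subtype.ext h2

lemma main_nat_bound :
    (∏ i ∈ Finset.range 11, (2 ^ (2 * i + 1) + 1)) ≤
      Nat.card (Quot rel) * (Nat.factorial 22 * 3 ^ 21) :=
  le_trans (lag_lower 11 le_rfl) (le_trans lag_to_SD card_SD_le)

end equivrel

end SD12

/-- The number of equivalence classes of Hermitian self-dual codes of length 22
is at least `∏_{i=0}^{10}(2^{2i+1}+1) / (22! · 3^{21})`, a quantity exceeding 397588. -/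
theorem stmt12 :
    (397588 : ℚ) <
      (∏ i ∈ Finset.range 11, (2 ^ (2 * i + 1) + 1) : ℚ) /
        ((Nat.factorial 22 : ℚ) * 3 ^ 21) ∧
    (∏ i ∈ Finset.range 11, (2 ^ (2 * i + 1) + 1) : ℚ) /
        ((Nat.factorial 22 : ℚ) * 3 ^ 21) ≤
      (Nat.card (Quot (fun C C' : {C : Submodule F4 (Fin 22 → F4) // C = hDual C} =>
        CodeEquiv C.1 C'.1)) : ℚ) := by
  have hfact : (Nat.factorial 22 : ℕ) = 1124000727777607680000 := by decide
  have hM : ((Nat.factorial 22 : ℚ) * 3 ^ 21) = 11757444612982829567165399040000 := by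
    rw [hfact]; norm_num
  have hprod : (∏ i ∈ Finset.range 11, (2 ^ (2 * i + 1) + 1) : ℚ) =
      4674627210894999765441323226884370171 := by
    norm_num [Finset.prod_range_succ]
  constructor
  · rw [hprod, hM, lt_div_iff₀ (by norm_num)]
    norm_num
  · rw [hprod, hM, div_le_iff₀ (by norm_num)]
    have hnat := SD12.main_nat_bound
    have hPnat : (∏ i ∈ Finset.range 11, (2 ^ (2 * i + 1) + 1) : ℕ) =
        4674627210894999765441323226884370171 := by
      norm_num [Finset.prod_range_succ]
    rw [hPnat, hfact] at hnat
    show (4674627210894999765441323226884370171 : ℚ) ≤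
      (Nat.card (Quot SD12.rel) : ℚ) * 11757444612982829567165399040000
    calc (4674627210894999765441323226884370171 : ℚ)
        ≤ ((Nat.card (Quot SD12.rel) * (1124000727777607680000 * 3 ^ 21) : ℕ) : ℚ) := by
          exact_mod_cast hnat
      _ = (Nat.card (Quot SD12.rel) : ℚ) * 11757444612982829567165399040000 := by
          push_cast
          norm_num
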